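/- Let q be a power of an odd prime and let G = 1 + 𝔤 be a pattern subgroup of UT_n(F_{q^k}), regarded over F_q, with † an involutive F_q-algebra antiautomorphism of 𝔤 satisfying (α e_ij)† ∈ F_{q^k}^× e_{j̄ ī} for all α ∈ F_{q^k}^×. Let U = {u ∈ G | u† = u⁻¹}, let 𝔥 = {x ∈ 𝔤 | x_ij = 0 if j ≤ n/2}, and let H = 1 + 𝔥. Then G = HU, i.e., every element of G can be written as hu with h ∈ H and u ∈ U. -/

import Mathlib

open Matrix

section PatternGroups

variable (F : Type) [Field F] (E : Type) [Field E] [Algebra F E] {n : ℕ}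

/-- The pattern subalgebra `𝔤 ⊆ 𝔲𝔱_n(E)` of matrices supported on the set `S` of strict
relations `i ≺ j` of a subposet of the usual linear order on `[n]`. -/
def patAlg (S : Set (Fin n × Fin n)) : Set (Matrix (Fin n) (Fin n) E) :=
  {x | ∀ i j : Fin n, (i, j) ∉ S → x i j = 0}

/-- The pattern subgroup `G = 1 + 𝔤`. -/
def patGrp (S : Set (Fin n × Fin n)) : Set (Matrix (Fin n) (Fin n) E) :=
  {g | ∃ x ∈ patAlg E S, g = 1 + x}

/-- The two-sided ideal `𝔥 = {x ∈ 𝔤 | x_{ij} = 0 if j ≤ n/2}` (indices read 1-based). -/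
def patHAlg (S : Set (Fin n × Fin n)) : Set (Matrix (Fin n) (Fin n) E) :=
  {x | x ∈ patAlg E S ∧ ∀ i j : Fin n, (j : ℕ) + 1 ≤ n / 2 → x i j = 0}

/-- The normal subgroup `H = 1 + 𝔥` of `G`. -/
def patHGrp (S : Set (Fin n × Fin n)) : Set (Matrix (Fin n) (Fin n) E) :=
  {g | ∃ x ∈ patHAlg E S, g = 1 + x}

/-- The extension of `†` from `𝔤` to `G = 1 + 𝔤`: `(1+x)† = 1 + x†`. -/
def dagGrp (dag : Matrix (Fin n) (Fin n) E → Matrix (Fin n) (Fin n) E)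
    (g : Matrix (Fin n) (Fin n) E) : Matrix (Fin n) (Fin n) E :=
  1 + dag (g - 1)

/-- The subgroup `U = {u ∈ G | u† = u⁻¹}` of the pattern group `G`. -/
def patUGrp (S : Set (Fin n × Fin n))
    (dag : Matrix (Fin n) (Fin n) E → Matrix (Fin n) (Fin n) E) :
    Set (Matrix (Fin n) (Fin n) E) :=
  {u | u ∈ patGrp E S ∧ u * dagGrp E dag u = 1 ∧ dagGrp E dag u * u = 1}

/-- The set `𝔲 = {x ∈ 𝔤 | x† = -x}`. -/
def patUAlg (S : Set (Fin n × Fin n))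
    (dag : Matrix (Fin n) (Fin n) E → Matrix (Fin n) (Fin n) E) :
    Set (Matrix (Fin n) (Fin n) E) :=
  {x | x ∈ patAlg E S ∧ dag x = -x}

/-- `†` is an involutive `F`-algebra antiautomorphism of the pattern algebra `𝔤` sending
each `α e_{ij}` (`α ∈ E^×`) into `E^× e_{\bar j \bar i}`, where `\bar i = n + 1 - i`. -/
structure IsPatternAntiInvolution (S : Set (Fin n × Fin n))
    (dag : Matrix (Fin n) (Fin n) E → Matrix (Fin n) (Fin n) E) : Prop where
  map_mem : ∀ x ∈ patAlg E S, dag x ∈ patAlg E S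
  map_add : ∀ x ∈ patAlg E S, ∀ y ∈ patAlg E S, dag (x + y) = dag x + dag y
  map_smul : ∀ (c : F), ∀ x ∈ patAlg E S,
    dag (algebraMap F E c • x) = algebraMap F E c • dag x
  map_mul : ∀ x ∈ patAlg E S, ∀ y ∈ patAlg E S, dag (x * y) = dag y * dag x
  invol : ∀ x ∈ patAlg E S, dag (dag x) = x
  elementary : ∀ i j : Fin n, (i, j) ∈ S → ∀ α : E, α ≠ 0 →
    ∃ β : E, β ≠ 0 ∧ dag (Matrix.single i j α) = Matrix.single j.rev i.rev β

/-- A Springer morphism: a bijection `f : G → 𝔤` with `f(U) = 𝔲` and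
`f(1+x) = x + Σ_{i ≥ 2} a_i x^i` with coefficients `a_i ∈ F`. -/
def IsSpringerMorphism (S : Set (Fin n × Fin n))
    (dag f : Matrix (Fin n) (Fin n) E → Matrix (Fin n) (Fin n) E) : Prop :=
  Set.BijOn f (patGrp E S) (patAlg E S) ∧
  f '' patUGrp E S dag = patUAlg E S dag ∧
  ∃ (N : ℕ) (a : ℕ → F), a 1 = 1 ∧
    ∀ x ∈ patAlg E S, f (1 + x) = ∑ i ∈ Finset.Ico 1 N, algebraMap F E (a i) • x ^ i

/-- The orbit `G · w = {g w g† | g ∈ G}` of `w` under the action `g · x = g x g†`. -/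
def patGrpDot (S : Set (Fin n × Fin n))
    (dag : Matrix (Fin n) (Fin n) E → Matrix (Fin n) (Fin n) E)
    (w : Matrix (Fin n) (Fin n) E) : Set (Matrix (Fin n) (Fin n) E) :=
  {z | ∃ g ∈ patGrp E S, z = g * w * dagGrp E dag g}

end PatternGroups

section Supercharacters

variable (F : Type) [Field F] (E : Type) [Field E] [Algebra F E] {n : ℕ}

/-- The orbit of `λ ∈ 𝔲*` under a subset `T ⊆ G` (for `T = G` or `T = H`), acting by
`(g·λ)(x) = λ(g⁻¹ · x) = λ(g⁻¹ x (g⁻¹)†)`.  An element `λ ∈ 𝔲*` is recorded as a function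
`𝔲 → F` (here represented via a functional `lam` on the full matrix space: only its values
on `𝔲` matter). -/
def patDualOrbit (S : Set (Fin n × Fin n))
    (dag : Matrix (Fin n) (Fin n) E → Matrix (Fin n) (Fin n) E)
    (T : Set (Matrix (Fin n) (Fin n) E))
    (lam : Module.Dual F (Matrix (Fin n) (Fin n) E)) :
    Set (↥(patUAlg E S dag) → F) :=
  {ψ | ∃ g ∈ T, ∀ x : ↥(patUAlg E S dag),
    ψ x = lam (g⁻¹ * (x : Matrix (Fin n) (Fin n) E) * dagGrp E dag g⁻¹)}

/-- The supercharacter `χ_λ = (|H·λ|/|G·λ|) Σ_{μ ∈ G·λ} θ ∘ μ ∘ f` of `U`, for `λ ∈ 𝔲*`. -/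
noncomputable def patSupchar (S : Set (Fin n × Fin n))
    (dag f : Matrix (Fin n) (Fin n) E → Matrix (Fin n) (Fin n) E)
    (θ : AddChar F ℂ) (lam : Module.Dual F (Matrix (Fin n) (Fin n) E))
    (u : Matrix (Fin n) (Fin n) E) : ℂ :=
  (Nat.card (patDualOrbit F E S dag (patHGrp E S) lam) : ℂ) /
    (Nat.card (patDualOrbit F E S dag (patGrp E S) lam) : ℂ) *
    ∑ᶠ ψ ∈ patDualOrbit F E S dag (patGrp E S) lam,
      @dite ℂ (f u ∈ patUAlg E S dag) (Classical.propDecidable _)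
        (fun h => θ (ψ ⟨f u, h⟩)) (fun _ => 0)

/-- The superclass `K_u = {v ∈ U | f(v) ∈ G · f(u)}` of `u`, as a subset of the ambient
matrix space. -/
def patSupclass (S : Set (Fin n × Fin n))
    (dag f : Matrix (Fin n) (Fin n) E → Matrix (Fin n) (Fin n) E)
    (u : Matrix (Fin n) (Fin n) E) : Set (Matrix (Fin n) (Fin n) E) :=
  {v | v ∈ patUGrp E S dag ∧ f v ∈ patGrpDot E S dag (f u)}

end Supercharacters

section Aux

variable {F : Type} [Field F] {E : Type} [Field E] [Algebra F E] {n : ℕ}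
variable {S : Set (Fin n × Fin n)}

/-- superdiagonal filtration -/
def filtX (m : ℕ) : Set (Matrix (Fin n) (Fin n) E) :=
  {x | ∀ i j : Fin n, (j : ℕ) < (i : ℕ) + m → x i j = 0}

lemma filtX_mono {a b : ℕ} (h : a ≤ b) {x : Matrix (Fin n) (Fin n) E}
    (hx : x ∈ filtX b) : x ∈ (filtX a : Set (Matrix (Fin n) (Fin n) E)) :=
  fun i j hij => hx i j (by omega)

lemma filtX_mul {a b : ℕ} {x y : Matrix (Fin n) (Fin n) E}
    (hx : x ∈ filtX a) (hy : y ∈ filtX b) :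
    x * y ∈ (filtX (a + b) : Set (Matrix (Fin n) (Fin n) E)) := by
  intro i j hij
  rw [Matrix.mul_apply]
  apply Finset.sum_eq_zero
  intro k _
  by_cases hk : (k : ℕ) < (i : ℕ) + a
  · rw [hx i k hk, zero_mul]
  · rw [hy k j (by omega), mul_zero]

lemma one_mem_filtX0 : (1 : Matrix (Fin n) (Fin n) E) ∈ filtX 0 := by
  intro i j hij
  exact Matrix.one_apply_ne (by rintro rfl; omega)

lemma filtX_add {a : ℕ} {x y : Matrix (Fin n) (Fin n) E}
    (hx : x ∈ filtX a) (hy : y ∈ filtX a) :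
    x + y ∈ (filtX a : Set (Matrix (Fin n) (Fin n) E)) :=
  fun i j h => by rw [Matrix.add_apply, hx i j h, hy i j h, add_zero]

lemma filtX_neg {a : ℕ} {x : Matrix (Fin n) (Fin n) E}
    (hx : x ∈ filtX a) : -x ∈ (filtX a : Set (Matrix (Fin n) (Fin n) E)) :=
  fun i j h => by rw [Matrix.neg_apply, hx i j h, neg_zero]

lemma filtX_n_eq_zero {x : Matrix (Fin n) (Fin n) E} (hx : x ∈ filtX n) : x = 0 := by
  ext i j
  rw [hx i j (by omega)]
  rfl

lemma patAlg_zero : (0 : Matrix (Fin n) (Fin n) E) ∈ patAlg E S := fun _ _ _ => rfl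

lemma patAlg_add {x y : Matrix (Fin n) (Fin n) E} (hx : x ∈ patAlg E S) (hy : y ∈ patAlg E S) :
    x + y ∈ patAlg E S :=
  fun i j h => by rw [Matrix.add_apply, hx i j h, hy i j h, add_zero]

lemma patAlg_neg {x : Matrix (Fin n) (Fin n) E} (hx : x ∈ patAlg E S) : -x ∈ patAlg E S :=
  fun i j h => by rw [Matrix.neg_apply, hx i j h, neg_zero]

lemma patAlg_mul (hS2 : ∀ i j k : Fin n, (i, j) ∈ S → (j, k) ∈ S → (i, k) ∈ S)
    {x y : Matrix (Fin n) (Fin n) E} (hx : x ∈ patAlg E S) (hy : y ∈ patAlg E S) :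
    x * y ∈ patAlg E S := by
  intro i j h
  rw [Matrix.mul_apply]
  apply Finset.sum_eq_zero
  intro k _
  by_cases h1 : (i, k) ∈ S
  · by_cases h2 : (k, j) ∈ S
    · exact absurd (hS2 i k j h1 h2) h
    · rw [hy k j h2, mul_zero]
  · rw [hx i k h1, zero_mul]

lemma patAlg_sum {ι : Type*} {s : Finset ι} {f : ι → Matrix (Fin n) (Fin n) E}
    (hf : ∀ i ∈ s, f i ∈ patAlg E S) : ∑ i ∈ s, f i ∈ patAlg E S := by
  classical
  induction s using Finset.induction_on with
  | empty => simpa using (patAlg_zero (E := E) (S := S))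
  | @insert a s hnot ih =>
    rw [Finset.sum_insert hnot]
    exact patAlg_add (hf _ (Finset.mem_insert_self _ _))
      (ih fun i hi => hf i (Finset.mem_insert_of_mem hi))

lemma patAlg_subset_filtX1 (hS1 : ∀ p ∈ S, p.1 < p.2)
    {x : Matrix (Fin n) (Fin n) E} (hx : x ∈ patAlg E S) : x ∈ filtX 1 := by
  intro i j hij
  apply hx
  intro hS
  have := hS1 (i, j) hS
  simp only [Fin.lt_def] at this
  omega

lemma pow_mem_filtX (hS1 : ∀ p ∈ S, p.1 < p.2)
    {x : Matrix (Fin n) (Fin n) E} (hx : x ∈ patAlg E S) :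
    ∀ k : ℕ, x ^ k ∈ (filtX k : Set (Matrix (Fin n) (Fin n) E))
  | 0 => by rw [pow_zero]; exact one_mem_filtX0
  | (k + 1) => by
    rw [pow_succ]
    have := filtX_mul (pow_mem_filtX hS1 hx k) (patAlg_subset_filtX1 hS1 hx)
    exact this

lemma pow_card_zero (hS1 : ∀ p ∈ S, p.1 < p.2)
    {x : Matrix (Fin n) (Fin n) E} (hx : x ∈ patAlg E S) : x ^ n = 0 :=
  filtX_n_eq_zero (pow_mem_filtX hS1 hx n)

lemma patAlg_pow (hS2 : ∀ i j k : Fin n, (i, j) ∈ S → (j, k) ∈ S → (i, k) ∈ S)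
    {x : Matrix (Fin n) (Fin n) E} (hx : x ∈ patAlg E S) :
    ∀ k : ℕ, 1 ≤ k → x ^ k ∈ patAlg E S
  | 0 => by omega
  | 1 => fun _ => by rwa [pow_one]
  | (k + 2) => fun _ => by
    rw [pow_succ]
    exact patAlg_mul hS2 (patAlg_pow hS2 hx (k + 1) (by omega)) hx

/-- explicit inverse of `1 + x` for nilpotent `x` -/
def ginv (x : Matrix (Fin n) (Fin n) E) : Matrix (Fin n) (Fin n) E :=
  ∑ i ∈ Finset.range n, (-x) ^ i

lemma negpow_n {x : Matrix (Fin n) (Fin n) E} (hx : x ^ n = 0) : (-x) ^ n = 0 := by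
  rw [neg_pow, hx, mul_zero]

lemma ginv_mul {x : Matrix (Fin n) (Fin n) E} (hx : x ^ n = 0) : ginv x * (1 + x) = 1 := by
  have h := geom_sum_mul_neg (-x) n
  rw [sub_neg_eq_add, negpow_n hx, sub_zero] at h
  exact h

lemma mul_ginv {x : Matrix (Fin n) (Fin n) E} (hx : x ^ n = 0) : (1 + x) * ginv x = 1 := by
  have h := mul_neg_geom_sum (-x) n
  rw [sub_neg_eq_add, negpow_n hx, sub_zero] at h
  exact h

lemma ginv_sub_one (hS2 : ∀ i j k : Fin n, (i, j) ∈ S → (j, k) ∈ S → (i, k) ∈ S)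
    {x : Matrix (Fin n) (Fin n) E} (hx : x ∈ patAlg E S) : ginv x - 1 ∈ patAlg E S := by
  rcases Nat.eq_zero_or_pos n with hn | hn
  · intro i _ _; rw [hn] at i; exact i.elim0
  · have h : ginv x = 1 + ∑ i ∈ Finset.Ico 1 n, (-x) ^ i := by
      rw [ginv, Finset.range_eq_Ico, Finset.sum_eq_sum_Ico_succ_bot hn, pow_zero]
    rw [h, add_sub_cancel_left]
    exact patAlg_sum fun i hi => patAlg_pow hS2 (patAlg_neg hx) i (Finset.mem_Ico.mp hi).1

lemma patHAlg_zero : (0 : Matrix (Fin n) (Fin n) E) ∈ patHAlg E S :=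
  ⟨patAlg_zero, fun _ _ _ => rfl⟩

lemma patHAlg_add {x y : Matrix (Fin n) (Fin n) E}
    (hx : x ∈ patHAlg E S) (hy : y ∈ patHAlg E S) : x + y ∈ patHAlg E S :=
  ⟨patAlg_add hx.1 hy.1,
   fun i j h => by rw [Matrix.add_apply, hx.2 i j h, hy.2 i j h, add_zero]⟩

lemma patHAlg_mul (hS2 : ∀ i j k : Fin n, (i, j) ∈ S → (j, k) ∈ S → (i, k) ∈ S)
    {x y : Matrix (Fin n) (Fin n) E}
    (hx : x ∈ patAlg E S) (hy : y ∈ patHAlg E S) : x * y ∈ patHAlg E S := by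
  refine ⟨patAlg_mul hS2 hx hy.1, fun i j h => ?_⟩
  rw [Matrix.mul_apply]
  exact Finset.sum_eq_zero fun k _ => by rw [hy.2 k j h, mul_zero]

variable {dag : Matrix (Fin n) (Fin n) E → Matrix (Fin n) (Fin n) E}

lemma dag_zero (hdag : IsPatternAntiInvolution F E S dag) : dag 0 = 0 := by
  have h := hdag.map_add 0 patAlg_zero 0 patAlg_zero
  rw [add_zero] at h
  exact (left_eq_add.mp h)

lemma std_mem {x : Matrix (Fin n) (Fin n) E} (hx : x ∈ patAlg E S) (i j : Fin n) :
    Matrix.single i j (x i j) ∈ patAlg E S := by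
  by_cases h : (i, j) ∈ S
  · intro i' j' h'
    have hne : ¬(i = i' ∧ j = j') := by rintro ⟨rfl, rfl⟩; exact h' h
    simp only [Matrix.single, Matrix.of_apply, if_neg hne]
  · rw [hx i j h, Matrix.single_zero]; exact patAlg_zero

lemma dag_finsum (hdag : IsPatternAntiInvolution F E S dag)
    {ι : Type*} {s : Finset ι} {f : ι → Matrix (Fin n) (Fin n) E}
    (hf : ∀ i ∈ s, f i ∈ patAlg E S) : dag (∑ i ∈ s, f i) = ∑ i ∈ s, dag (f i) := by
  classical
  induction s using Finset.induction_on with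
  | empty => simpa using dag_zero hdag
  | @insert a s hnot ih =>
    rw [Finset.sum_insert hnot, Finset.sum_insert hnot,
      hdag.map_add _ (hf _ (Finset.mem_insert_self _ _))
        _ (patAlg_sum fun i hi => hf i (Finset.mem_insert_of_mem hi)),
      ih fun i hi => hf i (Finset.mem_insert_of_mem hi)]

lemma dag_std_support (hdag : IsPatternAntiInvolution F E S dag)
    (i j : Fin n) (α : E) (h : (i, j) ∈ S ∨ α = 0) (i' j' : Fin n)
    (hne : ¬(i = j'.rev ∧ j = i'.rev)) :
    dag (Matrix.single i j α) i' j' = 0 := by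
  by_cases hα : α = 0
  · rw [hα, Matrix.single_zero, dag_zero hdag]; rfl
  · rcases h with h | h
    · obtain ⟨β, -, hβ⟩ := hdag.elementary i j h α hα
      rw [hβ]
      have hne' : ¬(j.rev = i' ∧ i.rev = j') := by
        rintro ⟨rfl, rfl⟩
        exact hne ⟨(Fin.rev_rev i).symm, (Fin.rev_rev j).symm⟩
      simp only [Matrix.single, Matrix.of_apply, if_neg hne']
    · exact absurd h hα

/-- the key entrywise formula for `dag` -/
lemma dag_apply (hdag : IsPatternAntiInvolution F E S dag)
    {x : Matrix (Fin n) (Fin n) E} (hx : x ∈ patAlg E S) (i' j' : Fin n) :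
    dag x i' j' = dag (Matrix.single j'.rev i'.rev (x j'.rev i'.rev)) i' j' := by
  have hrepr : dag x = ∑ i : Fin n, ∑ j : Fin n, dag (Matrix.single i j (x i j)) := by
    conv_lhs => rw [Matrix.matrix_eq_sum_single x]
    rw [dag_finsum hdag fun i _ => patAlg_sum fun j _ => std_mem hx i j]
    exact Finset.sum_congr rfl fun i _ => dag_finsum hdag fun j _ => std_mem hx i j
  have hXS : ∀ i j : Fin n, (i, j) ∈ S ∨ x i j = 0 := by
    intro i j
    by_cases h : (i, j) ∈ S
    · exact Or.inl h
    · exact Or.inr (hx i j h)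
  rw [hrepr]
  rw [Matrix.sum_apply]
  rw [Fintype.sum_eq_single j'.rev (fun i hi => ?_)]
  · rw [Matrix.sum_apply]
    rw [Fintype.sum_eq_single i'.rev (fun j hj => ?_)]
    exact dag_std_support hdag _ _ _ (hXS _ _) i' j' (by rintro ⟨-, rfl⟩; exact hj rfl)
  · rw [Matrix.sum_apply]
    exact Finset.sum_eq_zero fun j _ =>
      dag_std_support hdag _ _ _ (hXS _ _) i' j' (by rintro ⟨rfl, -⟩; exact hi rfl)

lemma dag_mem_filtX (hdag : IsPatternAntiInvolution F E S dag)
    {x : Matrix (Fin n) (Fin n) E} (hx : x ∈ patAlg E S) {m : ℕ} (hxf : x ∈ filtX m) :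
    dag x ∈ (filtX m : Set (Matrix (Fin n) (Fin n) E)) := by
  intro i' j' hij
  rw [dag_apply hdag hx i' j']
  have hi' : (i' : ℕ) < n := i'.isLt
  have hj' : (j' : ℕ) < n := j'.isLt
  have hz : x j'.rev i'.rev = 0 := by
    apply hxf
    rw [Fin.val_rev, Fin.val_rev]
    omega
  rw [hz, Matrix.single_zero, dag_zero hdag]
  rfl

lemma dag_mul_grp (hdag : IsPatternAntiInvolution F E S dag)
    (hS2 : ∀ i j k : Fin n, (i, j) ∈ S → (j, k) ∈ S → (i, k) ∈ S)
    {x y : Matrix (Fin n) (Fin n) E} (hx : x ∈ patAlg E S) (hy : y ∈ patAlg E S) :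
    (1 + dag y) * (1 + dag x) = 1 + dag (x + y + x * y) := by
  have h1 : dag (x + y + x * y) = dag x + dag y + dag y * dag x := by
    rw [hdag.map_add _ (patAlg_add hx hy) _ (patAlg_mul hS2 hx hy),
      hdag.map_add _ hx _ hy, hdag.map_mul _ hx _ hy]
  rw [h1]
  noncomm_ring


lemma exists_a0 (hS1 : ∀ p ∈ S, p.1 < p.2)
    (hdag : IsPatternAntiInvolution F E S dag) (h2 : (2 : F) ≠ 0)
    {z : Matrix (Fin n) (Fin n) E} (hz : z ∈ patAlg E S) (hzd : dag z = z)
    {m : ℕ} (hzf : z ∈ filtX m) :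
    ∃ a₀ : Matrix (Fin n) (Fin n) E, a₀ ∈ patHAlg E S ∧ a₀ ∈ filtX m ∧ a₀ + dag a₀ = z := by
  classical
  set c : E := algebraMap F E (2 : F)⁻¹ with hc
  set a₀ : Matrix (Fin n) (Fin n) E := Matrix.of fun i j =>
    if (j : ℕ) + 1 ≤ n / 2 then 0
    else if n - n / 2 ≤ (i : ℕ) then z i j
    else c * z i j with ha₀
  have ha₀app : ∀ i j : Fin n, a₀ i j =
      if (j : ℕ) + 1 ≤ n / 2 then 0
      else if n - n / 2 ≤ (i : ℕ) then z i j else c * z i j := fun i j => rfl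
  have ha₀zero : ∀ i j : Fin n, z i j = 0 → a₀ i j = 0 := by
    intro i j h
    rw [ha₀app]
    split_ifs <;> simp [h]
  have ha₀A : a₀ ∈ patAlg E S := fun i j h => ha₀zero i j (hz i j h)
  have ha₀H : a₀ ∈ patHAlg E S := ⟨ha₀A, fun i j h => by rw [ha₀app, if_pos h]⟩
  have ha₀F : a₀ ∈ filtX m := fun i j h => ha₀zero i j (hzf i j h)
  refine ⟨a₀, ha₀H, ha₀F, ?_⟩
  ext i' j'
  rw [Matrix.add_apply]
  by_cases hpS : (i', j') ∈ S
  swap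
  · rw [hz i' j' hpS, ha₀A i' j' hpS, hdag.map_mem a₀ ha₀A i' j' hpS, add_zero]
  -- p ∈ S
  have hij : (i' : ℕ) < (j' : ℕ) := by
    exact hS1 (i', j') hpS
  have hi' : (i' : ℕ) < n := i'.isLt
  have hj' : (j' : ℕ) < n := j'.isLt
  have hq1 : (j'.rev : ℕ) = n - ((j' : ℕ) + 1) := Fin.val_rev j'
  have hq2 : (i'.rev : ℕ) = n - ((i' : ℕ) + 1) := Fin.val_rev i'
  have hdagz : z i' j' = dag (Matrix.single j'.rev i'.rev (z j'.rev i'.rev)) i' j' := by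
    conv_lhs => rw [← hzd]
    exact dag_apply hdag hz i' j'
  have hdaga : dag a₀ i' j' =
      dag (Matrix.single j'.rev i'.rev (a₀ j'.rev i'.rev)) i' j' :=
    dag_apply hdag ha₀A i' j'
  by_cases hzq : z j'.rev i'.rev = 0
  · -- source entry vanishes: everything is zero
    have h1 : z i' j' = 0 := by
      rw [hdagz, hzq, Matrix.single_zero, dag_zero hdag]; rfl
    have h2' : a₀ j'.rev i'.rev = 0 := ha₀zero _ _ hzq
    rw [hdaga, h2', Matrix.single_zero, dag_zero hdag, h1, ha₀zero i' j' h1,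
      Matrix.zero_apply, add_zero]
  · have hqS : (j'.rev, i'.rev) ∈ S := by
      by_contra h
      exact hzq (hz _ _ h)
    by_cases hcol : (j' : ℕ) + 1 ≤ n / 2
    · -- Case A
      have e1 : a₀ i' j' = 0 := by rw [ha₀app, if_pos hcol]
      have e2 : a₀ j'.rev i'.rev = z j'.rev i'.rev := by
        rw [ha₀app, if_neg (by omega), if_pos (by omega)]
      rw [e1, hdaga, e2, ← hdagz, zero_add]
    · by_cases hrow : n - n / 2 ≤ (i' : ℕ)
      · -- Case B
        have e1 : a₀ i' j' = z i' j' := by rw [ha₀app, if_neg hcol, if_pos hrow]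
        have e2 : a₀ j'.rev i'.rev = 0 := by
          rw [ha₀app, if_pos (by omega)]
        rw [e1, hdaga, e2, Matrix.single_zero, dag_zero hdag,
          Matrix.zero_apply, add_zero]
      · -- Case C
        have e1 : a₀ i' j' = c * z i' j' := by rw [ha₀app, if_neg hcol, if_neg hrow]
        have e2 : a₀ j'.rev i'.rev = c * z j'.rev i'.rev := by
          rw [ha₀app, if_neg (by omega), if_neg (by omega)]
        have e3 : dag (Matrix.single j'.rev i'.rev (c * z j'.rev i'.rev)) =
            c • dag (Matrix.single j'.rev i'.rev (z j'.rev i'.rev)) := by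
          rw [hc, ← smul_eq_mul, ← Matrix.smul_single,
            hdag.map_smul (2 : F)⁻¹ _ (std_mem hz j'.rev i'.rev)]
        rw [e1, hdaga, e2, e3, Matrix.smul_apply, smul_eq_mul, ← hdagz, ← add_mul]
        have hcc : c + c = 1 := by
          rw [hc, ← map_add, show (2:F)⁻¹ + 2⁻¹ = 1 by rw [← two_mul, mul_inv_cancel₀ h2]]
          exact RingHom.map_one _
        rw [hcc, one_mul]


lemma key_induction (hS1 : ∀ p ∈ S, p.1 < p.2)
    (hS2 : ∀ i j k : Fin n, (i, j) ∈ S → (j, k) ∈ S → (i, k) ∈ S)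
    (hdag : IsPatternAntiInvolution F E S dag) (h2 : (2 : F) ≠ 0) :
    ∀ m : ℕ, ∀ z ∈ patAlg E S, z ∈ filtX (n - m) → dag z = z →
      ∃ a ∈ patHAlg E S, (1 + a) * (1 + dag a) = 1 + z := by
  intro m
  induction m with
  | zero =>
    intro z _ hzf _
    have hz0 : z = 0 := filtX_n_eq_zero (by simpa using hzf)
    refine ⟨0, patHAlg_zero, ?_⟩
    rw [hz0, dag_zero hdag]
    simp
  | succ m ih =>
    intro z hz hzf hzd
    obtain ⟨a₀, ha₀H, ha₀F, ha₀sum⟩ := exists_a0 hS1 hdag h2 hz hzd hzf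
    have ha₀A : a₀ ∈ patAlg E S := ha₀H.1
    set b := dag a₀ with hbdef
    have hbA : b ∈ patAlg E S := hdag.map_mem a₀ ha₀A
    have hbF : b ∈ filtX (n - (m + 1)) := dag_mem_filtX hdag ha₀A ha₀F
    have ha₀n : a₀ ^ n = 0 := pow_card_zero hS1 ha₀A
    have hbn : b ^ n = 0 := pow_card_zero hS1 hbA
    set z' := ginv a₀ * -(a₀ * b) * ginv b with hz'def
    have key1 : (1 + a₀) * (1 + z') * (1 + b) = 1 + z := by
      have e1 : (1 + a₀) * z' * (1 + b) = -(a₀ * b) := by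
        calc (1 + a₀) * z' * (1 + b)
            = ((1 + a₀) * ginv a₀) * -(a₀ * b) * (ginv b * (1 + b)) := by
              rw [hz'def]; noncomm_ring
          _ = -(a₀ * b) := by rw [mul_ginv ha₀n, ginv_mul hbn, one_mul, mul_one]
      calc (1 + a₀) * (1 + z') * (1 + b)
          = (1 + a₀) * (1 + b) + (1 + a₀) * z' * (1 + b) := by noncomm_ring
        _ = (1 + a₀) * (1 + b) + -(a₀ * b) := by rw [e1]
        _ = 1 + (a₀ + b) := by noncomm_ring
        _ = 1 + z := by rw [ha₀sum]
    have hgaA : ginv a₀ - 1 ∈ patAlg E S := ginv_sub_one hS2 ha₀A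
    have hgbA : ginv b - 1 ∈ patAlg E S := ginv_sub_one hS2 hbA
    have hwA : -(a₀ * b) ∈ patAlg E S := patAlg_neg (patAlg_mul hS2 ha₀A hbA)
    have hz'A : z' ∈ patAlg E S := by
      have hrw : z' = -(a₀ * b) + ((ginv a₀ - 1) * -(a₀ * b) +
          (-(a₀ * b) * (ginv b - 1) + (ginv a₀ - 1) * -(a₀ * b) * (ginv b - 1))) := by
        rw [hz'def]; noncomm_ring
      rw [hrw]
      exact patAlg_add hwA (patAlg_add (patAlg_mul hS2 hgaA hwA)
        (patAlg_add (patAlg_mul hS2 hwA hgbA)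
          (patAlg_mul hS2 (patAlg_mul hS2 hgaA hwA) hgbA)))
    have hwF : -(a₀ * b) ∈ filtX (n - m) := by
      apply filtX_neg
      rcases Nat.eq_zero_or_pos (n - (m + 1)) with hk | hk
      · have := filtX_mul (patAlg_subset_filtX1 hS1 ha₀A) (patAlg_subset_filtX1 hS1 hbA)
        exact filtX_mono (by omega) this
      · have := filtX_mul ha₀F hbF
        exact filtX_mono (by omega) this
    have hgaF : ginv a₀ ∈ filtX 0 := by
      have : ginv a₀ = 1 + (ginv a₀ - 1) := by abel
      rw [this]
      exact filtX_add one_mem_filtX0 (filtX_mono (by omega) (patAlg_subset_filtX1 hS1 hgaA))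
    have hgbF : ginv b ∈ filtX 0 := by
      have : ginv b = 1 + (ginv b - 1) := by abel
      rw [this]
      exact filtX_add one_mem_filtX0 (filtX_mono (by omega) (patAlg_subset_filtX1 hS1 hgbA))
    have hz'F : z' ∈ filtX (n - m) := by
      rw [show n - m = 0 + (n - m) + 0 from by omega, hz'def]
      exact filtX_mul (filtX_mul hgaF hwF) hgbF
    have cancel : ∀ X Y : Matrix (Fin n) (Fin n) E,
        (1 + a₀) * X * (1 + b) = (1 + a₀) * Y * (1 + b) → X = Y := by
      intro X Y hXY
      calc X = (ginv a₀ * (1 + a₀)) * X * ((1 + b) * ginv b) := by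
              rw [ginv_mul ha₀n, mul_ginv hbn, one_mul, mul_one]
        _ = ginv a₀ * ((1 + a₀) * X * (1 + b)) * ginv b := by noncomm_ring
        _ = ginv a₀ * ((1 + a₀) * Y * (1 + b)) * ginv b := by rw [hXY]
        _ = (ginv a₀ * (1 + a₀)) * Y * ((1 + b) * ginv b) := by noncomm_ring
        _ = Y := by rw [ginv_mul ha₀n, mul_ginv hbn, one_mul, mul_one]
    have hz'd : dag z' = z' := by
      set w₂ := z' + b + z' * b with hw₂def
      have hw₂A : w₂ ∈ patAlg E S :=
        patAlg_add (patAlg_add hz'A hbA) (patAlg_mul hS2 hz'A hbA)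
      have hfact : (1 + z') * (1 + b) = 1 + w₂ := by rw [hw₂def]; noncomm_ring
      have hzeq : 1 + z = (1 + a₀) * (1 + w₂) := by rw [← hfact, ← mul_assoc, key1]
      have hzdec : z = a₀ + w₂ + a₀ * w₂ := by
        have : (1 : Matrix (Fin n) (Fin n) E) + z = 1 + (a₀ + w₂ + a₀ * w₂) := by
          rw [hzeq]; noncomm_ring
        exact add_left_cancel this
      have hdz : (1 + dag w₂) * (1 + dag a₀) = 1 + z := by
        rw [dag_mul_grp hdag hS2 ha₀A hw₂A, ← hzdec, hzd]
      have hdw₂ : (1 + dag b) * (1 + dag z') = 1 + dag w₂ := by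
        rw [dag_mul_grp hdag hS2 hz'A hbA, hw₂def]
      rw [hbdef] at hdw₂
      rw [hdag.invol a₀ ha₀A] at hdw₂
      have hfull : (1 + a₀) * (1 + dag z') * (1 + b) = (1 + a₀) * (1 + z') * (1 + b) := by
        rw [key1, ← hdz, ← hdw₂, ← hbdef]
      have := cancel _ _ hfull
      exact add_left_cancel this
    obtain ⟨a', ha'H, ha'eq⟩ := ih z' hz'A hz'F hz'd
    have ha'A : a' ∈ patAlg E S := ha'H.1
    refine ⟨a₀ + a' + a₀ * a', patHAlg_add (patHAlg_add ha₀H ha'H)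
      (patHAlg_mul hS2 ha₀A ha'H), ?_⟩
    have hA : (1 : Matrix (Fin n) (Fin n) E) + (a₀ + a' + a₀ * a') = (1 + a₀) * (1 + a') := by
      noncomm_ring
    have hB : (1 : Matrix (Fin n) (Fin n) E) + dag (a₀ + a' + a₀ * a') =
        (1 + dag a') * (1 + dag a₀) := (dag_mul_grp hdag hS2 ha₀A ha'A).symm
    rw [hA, hB, ← key1, ← hbdef]
    rw [show (1 + a₀) * (1 + a') * ((1 + dag a') * (1 + dag a₀)) =
      (1 + a₀) * (((1 + a') * (1 + dag a')) * (1 + dag a₀)) from by noncomm_ring]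
    rw [ha'eq]
    noncomm_ring

end Aux

/-- With `G = 1 + 𝔤` a pattern subgroup, `†` an anti-involution as above,
`U = {u ∈ G | u† = u⁻¹}`, `𝔥 = {x ∈ 𝔤 | x_ij = 0 if j ≤ n/2}` and `H = 1 + 𝔥`: `G = HU`,
i.e. every element of `G` can be written as `hu` with `h ∈ H` and `u ∈ U`. -/
theorem pattern_group_eq_H_mul_U
    (F : Type) [Field F] [Fintype F] (E : Type) [Field E] [Fintype E] [Algebra F E]
    (hodd : ringChar F ≠ 2)
    {n : ℕ} (S : Set (Fin n × Fin n))
    (hS1 : ∀ p ∈ S, p.1 < p.2)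
    (hS2 : ∀ i j k : Fin n, (i, j) ∈ S → (j, k) ∈ S → (i, k) ∈ S)
    (dag : Matrix (Fin n) (Fin n) E → Matrix (Fin n) (Fin n) E)
    (hdag : IsPatternAntiInvolution F E S dag) :
    ∀ g ∈ patGrp E S, ∃ h ∈ patHGrp E S, ∃ u ∈ patUGrp E S dag, g = h * u := by
  intro g hg
  obtain ⟨x, hx, rfl⟩ := hg
  have h2 : (2 : F) ≠ 0 := Ring.two_ne_zero hodd
  have hdx : dag x ∈ patAlg E S := hdag.map_mem x hx
  set z := x + dag x + x * dag x with hzdef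
  have hzA : z ∈ patAlg E S := patAlg_add (patAlg_add hx hdx) (patAlg_mul hS2 hx hdx)
  have hxdx : (1 + x) * (1 + dag x) = 1 + z := by rw [hzdef]; noncomm_ring
  have hzd : dag z = z := by
    have h := dag_mul_grp hdag hS2 hx hdx
    rw [hdag.invol x hx] at h
    exact add_left_cancel (h.symm.trans hxdx)
  have hzF : z ∈ filtX (n - n) := by
    rw [Nat.sub_self]
    exact filtX_mono (by omega) (patAlg_subset_filtX1 hS1 hzA)
  obtain ⟨a, haH, haEq⟩ := key_induction hS1 hS2 hdag h2 n z hzA hzF hzd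
  have haA : a ∈ patAlg E S := haH.1
  have han : a ^ n = 0 := pow_card_zero hS1 haA
  have hdaA : dag a ∈ patAlg E S := hdag.map_mem a haA
  set c := ginv a - 1 with hcdef
  have hcA : c ∈ patAlg E S := ginv_sub_one hS2 haA
  have hgc : ginv a = 1 + c := by rw [hcdef]; abel
  have hu : ginv a * (1 + x) = 1 + (c + x + c * x) := by rw [hgc]; noncomm_ring
  have huA : c + x + c * x ∈ patAlg E S :=
    patAlg_add (patAlg_add hcA hx) (patAlg_mul hS2 hcA hx)
  have hu1 : ginv a * (1 + x) - 1 = c + x + c * x := by rw [hu]; abel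
  have hdagu : dagGrp E dag (ginv a * (1 + x)) = (1 + dag x) * (1 + dag c) := by
    show 1 + dag (ginv a * (1 + x) - 1) = (1 + dag x) * (1 + dag c)
    rw [hu1, dag_mul_grp hdag hS2 hcA hx]
  have h0 : c + a + c * a = 0 := by
    have hga : ginv a * (1 + a) = 1 := ginv_mul han
    rw [hgc] at hga
    have h1 : (1 : Matrix (Fin n) (Fin n) E) + (c + a + c * a) = (1 + c) * (1 + a) := by
      noncomm_ring
    rw [hga] at h1
    exact add_left_cancel (h1.trans (add_zero (1 : Matrix (Fin n) (Fin n) E)).symm)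
  have hinv2 : (1 + dag a) * (1 + dag c) = 1 := by
    rw [dag_mul_grp hdag hS2 hcA haA, h0, dag_zero hdag, add_zero]
  have huu : (ginv a * (1 + x)) * dagGrp E dag (ginv a * (1 + x)) = 1 := by
    rw [hdagu]
    calc ginv a * (1 + x) * ((1 + dag x) * (1 + dag c))
        = ginv a * ((1 + x) * (1 + dag x)) * (1 + dag c) := by noncomm_ring
      _ = ginv a * ((1 + a) * (1 + dag a)) * (1 + dag c) := by rw [hxdx, ← haEq]
      _ = (ginv a * (1 + a)) * ((1 + dag a) * (1 + dag c)) := by noncomm_ring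
      _ = 1 := by rw [ginv_mul han, hinv2, one_mul]
  refine ⟨1 + a, ⟨a, haH, rfl⟩, ginv a * (1 + x),
    ⟨⟨c + x + c * x, huA, hu⟩, huu, mul_eq_one_comm.mp huu⟩, ?_⟩
  rw [← mul_assoc, mul_ginv han, one_mul]
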